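/- Let k be a field of characteristic zero, m ≥ 1, w : Fin m → ℕ a system of weights with w_m ≥ 1 (the last variable x_m playing the role of the deformation parameter s), and let G ∈ k[x_1,…,x_m] be a nonzero polynomial that is weighted homogeneous of degree d ≥ 1 with respect to w. Then the two ideals of k[x_1,…,x_m] obtained by projecting logarithmic vector fields to their last component satisfy: {ξ_m : ξ ∈ Der(−log X)} = {ξ_m : ξ ∈ Der(−log G)} + ⟨x_m⟩, where ⟨x_m⟩ is the principal ideal generated by the last variable. (This is the identity dπ(Der(−log X)) = dπ(Der(−log G)) + (s) = FT(π,G) + (s) for π the projection to the parameter.) -/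

import Mathlib

open MvPolynomial

lemma X_mul_pderiv_monomial {k : Type*} [CommRing k] {σ : Type*} [DecidableEq σ]
    (i : σ) (s : σ →₀ ℕ) (a : k) :
    X i * pderiv i (monomial s a) = monomial s (a * s i) := by
  rw [pderiv_monomial]
  by_cases h : s i = 0
  · simp [h]
  · have hs : Finsupp.single i 1 + (s - Finsupp.single i 1) = s := by
      ext j
      by_cases hj : i = j
      · subst hj
        simp only [Finsupp.add_apply, Finsupp.tsub_apply, Finsupp.single_eq_same]
        omega
      · simp [Finsupp.single_apply, hj]
    rw [X, monomial_mul, one_mul, hs]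

lemma euler_identity {k : Type*} [CommRing k] {n : ℕ} (w : Fin (n + 1) → ℕ)
    (d : ℕ) (G : MvPolynomial (Fin (n + 1)) k) (hG : G.IsWeightedHomogeneous w d) :
    ∑ i, C (w i : k) * (X i * pderiv i G) = C (d : k) * G := by
  conv_lhs => rw [← support_sum_monomial_coeff G]
  conv_rhs => rw [← support_sum_monomial_coeff G]
  rw [Finset.mul_sum]
  have : ∀ i : Fin (n + 1),
      C ((w i : k)) * (X i * pderiv i (∑ v ∈ G.support, monomial v (coeff v G)))
      = ∑ v ∈ G.support, C (w i : k) * (X i * pderiv i (monomial v (coeff v G))) := by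
    intro i
    rw [map_sum, Finset.mul_sum, Finset.mul_sum]
  simp_rw [this]
  rw [Finset.sum_comm]
  refine Finset.sum_congr rfl fun v hv => ?_
  have hdeg : Finsupp.weight w v = d := hG (mem_support_iff.mp hv)
  simp_rw [_root_.X_mul_pderiv_monomial, C_mul_monomial]
  rw [← map_sum (monomial v)]
  congr 1
  have hnat : ∑ x, v x * w x = d := by
    rw [← hdeg, Finsupp.weight_apply, Finsupp.sum_fintype]
    · simp [mul_comm]
    · simp
  rw [← hnat]
  push_cast
  rw [Finset.sum_mul]
  exact Finset.sum_congr rfl fun x _ => by ring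

/-- For a nonzero weighted homogeneous polynomial `G` (degree `d ≥ 1`, last weight `≥ 1`)
over a field of characteristic zero, the ideals of last components of logarithmic vector
fields satisfy `dπ(Der(−log X)) = dπ(Der(−log G)) + (x_m)`, i.e. `h` is the last component
of some `ξ` with `∑ i, ξᵢ·∂ᵢG ∈ ⟨G⟩` iff `h = ξ'_m + q·x_m` for some `ξ'` with
`∑ i, ξ'ᵢ·∂ᵢG = 0` and some `q`. -/
theorem last_component_ideal_eq {k : Type*} [Field k] [CharZero k] {n : ℕ}
    (w : Fin (n + 1) → ℕ) (hw : 1 ≤ w (Fin.last n))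
    (G : MvPolynomial (Fin (n + 1)) k) (hG0 : G ≠ 0) (d : ℕ) (hd : 1 ≤ d)
    (hG : G.IsWeightedHomogeneous w d) :
    {h : MvPolynomial (Fin (n + 1)) k |
        ∃ ξ : Fin (n + 1) → MvPolynomial (Fin (n + 1)) k,
          (∑ i, ξ i * pderiv i G) ∈ Ideal.span {G} ∧ ξ (Fin.last n) = h}
    = {h : MvPolynomial (Fin (n + 1)) k |
        ∃ (ξ : Fin (n + 1) → MvPolynomial (Fin (n + 1)) k)
          (q : MvPolynomial (Fin (n + 1)) k),
          (∑ i, ξ i * pderiv i G) = 0 ∧ h = ξ (Fin.last n) + q * X (Fin.last n)} := by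
  have hdk : (d : k) ≠ 0 := Nat.cast_ne_zero.mpr (by omega)
  have hwk : ((w (Fin.last n) : k)) ≠ 0 := Nat.cast_ne_zero.mpr (by omega)
  have euler := euler_identity w d G hG
  ext h
  simp only [Set.mem_setOf_eq]
  constructor
  · rintro ⟨ξ, hmem, hlast⟩
    obtain ⟨p, hp⟩ := Ideal.mem_span_singleton'.mp hmem
    refine ⟨fun i => ξ i - C ((d : k)⁻¹) * p * (C (w i : k) * X i),
      C ((d : k)⁻¹) * p * C (w (Fin.last n) : k), ?_, ?_⟩
    · have h1 : ∑ i, (ξ i - C ((d : k)⁻¹) * p * (C (w i : k) * X i)) * pderiv i G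
          = (∑ i, ξ i * pderiv i G)
            - C ((d : k)⁻¹) * p * ∑ i, C (w i : k) * (X i * pderiv i G) := by
        rw [Finset.mul_sum, ← Finset.sum_sub_distrib]
        exact Finset.sum_congr rfl fun i _ => by ring
      have h2 : (C ((d : k)⁻¹) : MvPolynomial (Fin (n + 1)) k) * C ((d : k)) = 1 := by
        rw [← C_mul, inv_mul_cancel₀ hdk, C_1]
      rw [h1, euler, ← hp,
        show C ((d : k)⁻¹) * p * (C (d : k) * G)
            = (C ((d : k)⁻¹) * C ((d : k))) * (p * G) by ring, h2, one_mul, sub_self]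
    · rw [← hlast]; ring
  · rintro ⟨ξ, q, hsum, hh⟩
    refine ⟨fun i => ξ i + C ((w (Fin.last n) : k)⁻¹) * q * (C (w i : k) * X i), ?_, ?_⟩
    · have h1 : ∑ i, (ξ i + C ((w (Fin.last n) : k)⁻¹) * q * (C (w i : k) * X i)) * pderiv i G
          = (∑ i, ξ i * pderiv i G)
            + C ((w (Fin.last n) : k)⁻¹) * q * ∑ i, C (w i : k) * (X i * pderiv i G) := by
        rw [Finset.mul_sum, ← Finset.sum_add_distrib]
        exact Finset.sum_congr rfl fun i _ => by ring
      rw [h1, hsum, zero_add, euler]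
      exact Ideal.mem_span_singleton'.mpr ⟨C ((w (Fin.last n) : k)⁻¹) * q * C (d : k), by ring⟩
    · have h2 : (C ((w (Fin.last n) : k)⁻¹) : MvPolynomial (Fin (n + 1)) k)
          * C ((w (Fin.last n) : k)) = 1 := by
        rw [← C_mul, inv_mul_cancel₀ hwk, C_1]
      simp only
      rw [show ξ (Fin.last n) + C ((w (Fin.last n) : k)⁻¹) * q
            * (C (w (Fin.last n) : k) * X (Fin.last n))
          = ξ (Fin.last n) + (C ((w (Fin.last n) : k)⁻¹) * C ((w (Fin.last n) : k)))
            * (q * X (Fin.last n)) by ring, h2, one_mul]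
      exact hh.symm
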